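/- Let d1, d2 be positive integers, D = d1·d2, and H_Δ(k) = W_Δ(k) − 2·W_Δ(k−D) + W_Δ(k−2D) where W_Δ(k) = #{v ∈ ℤ²_{≥0} : max(v1/d1, v2/d2) = k/D}. Then H_Δ(k) ≥ 0 for all k ≥ 0, and H_Δ(k) = 0 for all k > 2D. -/

import Mathlib

open Finset

lemma set_eq_nat (d1 d2 : ℕ) (hd1 : 0 < d1) (hd2 : 0 < d2) (K : ℕ) :
    {v : ℕ × ℕ | max ((v.1 : ℚ) / d1) ((v.2 : ℚ) / d2) = (K : ℚ) / ((d1 : ℚ) * d2)}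
      = {v : ℕ × ℕ | max (v.1 * d2) (v.2 * d1) = K} := by
  ext ⟨a, b⟩
  have h1 : (0:ℚ) < d1 := by exact_mod_cast hd1
  have h2 : (0:ℚ) < d2 := by exact_mod_cast hd2
  have hD : (0:ℚ) < (d1:ℚ) * d2 := by positivity
  simp only [Set.mem_setOf_eq]
  have e1 : (a : ℚ) / d1 = (↑(a * d2) : ℚ) / ((d1:ℚ) * d2) := by
    push_cast; rw [div_eq_div_iff h1.ne' hD.ne']; ring
  have e2 : (b : ℚ) / d2 = (↑(b * d1) : ℚ) / ((d1:ℚ) * d2) := by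
    push_cast; rw [div_eq_div_iff h2.ne' hD.ne']; ring
  rw [e1, e2, max_div_div_right hD.le, div_eq_div_iff hD.ne' hD.ne',
    mul_left_inj' hD.ne', ← Nat.cast_max, Nat.cast_inj]

lemma filterA (d : ℕ) (hd : 0 < d) (K : ℕ) :
    (Finset.range (K+1)).filter (fun a => a * d = K)
      = if d ∣ K then {K / d} else ∅ := by
  ext a
  simp only [mem_filter, mem_range]
  split
  · rename_i h
    simp only [mem_singleton]
    constructor
    · rintro ⟨_, h2⟩
      exact (Nat.div_eq_of_eq_mul_left hd h2.symm).symm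
    · rintro rfl
      have h3 : K / d * d = K := Nat.div_mul_cancel h
      have : K / d ≤ K := Nat.div_le_self _ _
      exact ⟨by omega, h3⟩
  · rename_i h
    simp only [notMem_empty, iff_false]
    rintro ⟨_, h2⟩
    exact h ⟨a, by rw [← h2]; ring⟩

lemma filterB (d : ℕ) (hd : 0 < d) (K : ℕ) :
    (Finset.range (K+1)).filter (fun b => b * d ≤ K) = Finset.range (K / d + 1) := by
  ext b
  simp only [mem_filter, mem_range]
  have h := Nat.le_div_iff_mul_le hd (x := b) (y := K)
  have : K / d ≤ K := Nat.div_le_self _ _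
  omega

lemma card_ite (d K : ℕ) : (if d ∣ K then ({K / d} : Finset ℕ) else ∅).card
    = if d ∣ K then 1 else 0 := by split <;> simp

lemma card_count (d1 d2 : ℕ) (hd1 : 0 < d1) (hd2 : 0 < d2) (K : ℕ) :
    Nat.card {v : ℕ × ℕ |
        max ((v.1 : ℚ) / d1) ((v.2 : ℚ) / d2) = (K : ℚ) / ((d1 : ℚ) * d2)}
      + (if d2 ∣ K then 1 else 0) * (if d1 ∣ K then 1 else 0)
    = (if d2 ∣ K then 1 else 0) * (K / d1 + 1)
      + (if d1 ∣ K then 1 else 0) * (K / d2 + 1) := by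
  rw [set_eq_nat d1 d2 hd1 hd2 K]
  set s := Finset.range (K+1) ×ˢ Finset.range (K+1) with hs
  have hset : {v : ℕ × ℕ | max (v.1 * d2) (v.2 * d1) = K}
      = ↑(s.filter (fun v => max (v.1 * d2) (v.2 * d1) = K)) := by
    ext ⟨a, b⟩
    simp only [Set.mem_setOf_eq, coe_filter, mem_product, mem_range, hs, Set.mem_setOf_eq]
    constructor
    · intro h
      have ha : a * d2 ≤ K := h ▸ le_max_left _ _
      have hb : b * d1 ≤ K := h ▸ le_max_right _ _
      have ha2 : a ≤ a * d2 := Nat.le_mul_of_pos_right a hd2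
      have hb2 : b ≤ b * d1 := Nat.le_mul_of_pos_right b hd1
      exact ⟨⟨by omega, by omega⟩, h⟩
    · exact fun h => h.2
  rw [hset, Nat.card_coe_set_eq, Set.ncard_coe_finset]
  have hsplit : s.filter (fun v => max (v.1 * d2) (v.2 * d1) = K)
      = s.filter (fun v => v.1 * d2 = K ∧ v.2 * d1 ≤ K)
        ∪ s.filter (fun v => v.2 * d1 = K ∧ v.1 * d2 ≤ K) := by
    rw [← filter_or]
    apply filter_congr
    intro v _
    constructor
    · intro h
      rcases max_cases (v.1 * d2) (v.2 * d1) with ⟨h1, h2⟩ | ⟨h1, h2⟩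
      · exact Or.inl ⟨h1 ▸ h, by omega⟩
      · exact Or.inr ⟨h1 ▸ h, by omega⟩
    · rintro (⟨h1, h2⟩ | ⟨h1, h2⟩) <;> simp [h1, h2, max_eq_left, max_eq_right]
  have hinter : s.filter (fun v => v.1 * d2 = K ∧ v.2 * d1 ≤ K)
      ∩ s.filter (fun v => v.2 * d1 = K ∧ v.1 * d2 ≤ K)
      = s.filter (fun v => v.1 * d2 = K ∧ v.2 * d1 = K) := by
    rw [← filter_and]
    apply filter_congr
    intro v _
    constructor
    · rintro ⟨⟨h1, _⟩, ⟨h2, _⟩⟩; exact ⟨h1, h2⟩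
    · rintro ⟨h1, h2⟩; exact ⟨⟨h1, by omega⟩, ⟨h2, by omega⟩⟩
  have key := card_union_add_card_inter
    (s.filter (fun v => v.1 * d2 = K ∧ v.2 * d1 ≤ K))
    (s.filter (fun v => v.2 * d1 = K ∧ v.1 * d2 ≤ K))
  rw [← hsplit, hinter] at key
  have c1 : (s.filter (fun v => v.1 * d2 = K ∧ v.2 * d1 ≤ K)).card
      = (if d2 ∣ K then 1 else 0) * (K / d1 + 1) := by
    have hp := Finset.filter_product (s := Finset.range (K+1)) (t := Finset.range (K+1))
      (p := fun a => a * d2 = K) (q := fun b => b * d1 ≤ K)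
    rw [hs, hp, card_product, filterA d2 hd2 K, filterB d1 hd1 K, card_ite, card_range]
  have c2 : (s.filter (fun v => v.2 * d1 = K ∧ v.1 * d2 ≤ K)).card
      = (if d1 ∣ K then 1 else 0) * (K / d2 + 1) := by
    have : s.filter (fun v => v.2 * d1 = K ∧ v.1 * d2 ≤ K)
        = s.filter (fun v => v.1 * d2 ≤ K ∧ v.2 * d1 = K) := by
      apply filter_congr; intro v _; tauto
    have hp := Finset.filter_product (s := Finset.range (K+1)) (t := Finset.range (K+1))
      (p := fun a => a * d2 ≤ K) (q := fun b => b * d1 = K)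
    rw [this, hs, hp, card_product, filterA d1 hd1 K, filterB d2 hd2 K, card_ite, card_range, mul_comm]
  have c3 : (s.filter (fun v => v.1 * d2 = K ∧ v.2 * d1 = K)).card
      = (if d2 ∣ K then 1 else 0) * (if d1 ∣ K then 1 else 0) := by
    have hp := Finset.filter_product (s := Finset.range (K+1)) (t := Finset.range (K+1))
      (p := fun a => a * d2 = K) (q := fun b => b * d1 = K)
    rw [hs, hp, card_product, filterA d2 hd2 K, filterA d1 hd1 K, card_ite, card_ite]
  omega

private lemma W_formula (d1 d2 : ℕ) (hd1 : 0 < d1) (hd2 : 0 < d2)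
    (W : ℤ → ℕ)
    (hW : ∀ k : ℤ, W k = if 0 ≤ k then
      Nat.card {v : ℕ × ℕ |
        max ((v.1 : ℚ) / d1) ((v.2 : ℚ) / d2) = (k : ℚ) / ((d1 : ℚ) * d2)}
      else 0) (k : ℤ) (hk : 0 ≤ k) :
    (W k : ℤ) + (if (d2:ℤ) ∣ k then 1 else 0) * (if (d1:ℤ) ∣ k then 1 else 0)
      = (if (d2:ℤ) ∣ k then 1 else 0) * (k / (d1:ℤ) + 1)
        + (if (d1:ℤ) ∣ k then 1 else 0) * (k / (d2:ℤ) + 1) := by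
  rw [hW k, if_pos hk]
  set K := k.toNat with hK
  have hKk : (K : ℤ) = k := Int.toNat_of_nonneg hk
  have hQ : (k : ℚ) = (K : ℚ) := by rw [← hKk]; push_cast; ring
  have hdvd2 : ((d2:ℤ) ∣ k) ↔ (d2 ∣ K) := by rw [← hKk]; exact Int.natCast_dvd_natCast
  have hdvd1 : ((d1:ℤ) ∣ k) ↔ (d1 ∣ K) := by rw [← hKk]; exact Int.natCast_dvd_natCast
  have he1 : k / (d1:ℤ) = ((K / d1 : ℕ) : ℤ) := by rw [← hKk]; exact_mod_cast (Int.natCast_div K d1)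
  have he2 : k / (d2:ℤ) = ((K / d2 : ℕ) : ℤ) := by rw [← hKk]; exact_mod_cast (Int.natCast_div K d2)
  rw [hQ]
  simp only [hdvd2, hdvd1, he1, he2]
  exact_mod_cast card_count d1 d2 hd1 hd2 K

/-- With `W_Δ(k)` counting lattice points of weight exactly `k/D` (`D = d1·d2`), `W` of
negative arguments zero, and `H_Δ(k) = W_Δ(k) − 2·W_Δ(k−D) + W_Δ(k−2D)`, we have
`H_Δ(k) ≥ 0` for all `k ≥ 0` and `H_Δ(k) = 0` for all `k > 2D`. -/
theorem H_nonneg_and_vanishes (d1 d2 : ℕ) (hd1 : 0 < d1) (hd2 : 0 < d2)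
    (W : ℤ → ℕ)
    (hW : ∀ k : ℤ, W k = if 0 ≤ k then
      Nat.card {v : ℕ × ℕ |
        max ((v.1 : ℚ) / d1) ((v.2 : ℚ) / d2) = (k : ℚ) / ((d1 : ℚ) * d2)}
      else 0) :
    (∀ k : ℤ, 0 ≤ k →
      0 ≤ (W k : ℤ) - 2 * (W (k - d1 * d2) : ℤ) + (W (k - 2 * (d1 * d2)) : ℤ)) ∧
    (∀ k : ℤ, 2 * (d1 * d2 : ℤ) < k →
      (W k : ℤ) - 2 * (W (k - d1 * d2) : ℤ) + (W (k - 2 * (d1 * d2)) : ℤ) = 0) := by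
  have h1 : (0:ℤ) < d1 := by exact_mod_cast hd1
  have h2 : (0:ℤ) < d2 := by exact_mod_cast hd2
  have hD : (0:ℤ) < (d1:ℤ) * d2 := by positivity
  have hd2D : (d2:ℤ) ∣ (d1:ℤ) * d2 := dvd_mul_left _ _
  have hd1D : (d1:ℤ) ∣ (d1:ℤ) * d2 := dvd_mul_right _ _
  -- ediv shift lemmas
  have ediv1 : ∀ m : ℤ, (m - (d1:ℤ) * d2) / (d1:ℤ) = m / d1 - d2 := by
    intro m
    have h := Int.add_mul_ediv_right (m - (d1:ℤ) * d2) (d2:ℤ) h1.ne'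
    have hm : m - (d1:ℤ) * d2 + (d2:ℤ) * d1 = m := by ring
    rw [hm] at h
    linarith
  have ediv2 : ∀ m : ℤ, (m - (d1:ℤ) * d2) / (d2:ℤ) = m / d2 - d1 := by
    intro m
    have h := Int.add_mul_ediv_right (m - (d1:ℤ) * d2) (d1:ℤ) h2.ne'
    have hm : m - (d1:ℤ) * d2 + (d1:ℤ) * d2 = m := by ring
    rw [hm] at h
    linarith
  have ediv1' : ∀ m : ℤ, (m - 2 * ((d1:ℤ) * d2)) / (d1:ℤ) = m / d1 - 2 * d2 := by
    intro m
    have h := Int.add_mul_ediv_right (m - 2 * ((d1:ℤ) * d2)) (2 * (d2:ℤ)) h1.ne'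
    have hm : m - 2 * ((d1:ℤ) * d2) + 2 * (d2:ℤ) * d1 = m := by ring
    rw [hm] at h
    linarith
  have ediv2' : ∀ m : ℤ, (m - 2 * ((d1:ℤ) * d2)) / (d2:ℤ) = m / d2 - 2 * d1 := by
    intro m
    have h := Int.add_mul_ediv_right (m - 2 * ((d1:ℤ) * d2)) (2 * (d1:ℤ)) h2.ne'
    have hm : m - 2 * ((d1:ℤ) * d2) + 2 * (d1:ℤ) * d2 = m := by ring
    rw [hm] at h
    linarith
  -- vanishing for k ≥ 2D
  have hzero : ∀ k : ℤ, 2 * ((d1:ℤ) * d2) ≤ k →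
      (W k : ℤ) - 2 * (W (k - d1 * d2) : ℤ) + (W (k - 2 * (d1 * d2)) : ℤ) = 0 := by
    intro k hk
    have hk0 : (0:ℤ) ≤ k := by linarith
    have hk1 : (0:ℤ) ≤ k - (d1:ℤ) * d2 := by linarith
    have hk2 : (0:ℤ) ≤ k - 2 * ((d1:ℤ) * d2) := by linarith
    have e1 := W_formula d1 d2 hd1 hd2 W hW k hk0
    have e2 := W_formula d1 d2 hd1 hd2 W hW (k - (d1:ℤ) * d2) hk1
    have e3 := W_formula d1 d2 hd1 hd2 W hW (k - 2 * ((d1:ℤ) * d2)) hk2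
    simp only [dvd_sub_left hd2D, dvd_sub_left hd1D, dvd_sub_left (Dvd.dvd.mul_left hd2D 2),
      dvd_sub_left (Dvd.dvd.mul_left hd1D 2), ediv1, ediv2, ediv1', ediv2'] at e2 e3
    linear_combination e1 - 2 * e2 + e3
  constructor
  · intro k hk
    rcases lt_or_ge k ((d1:ℤ) * d2) with h | h
    · have w1 : W (k - (d1:ℤ) * d2) = 0 := by
        rw [hW]; exact if_neg (by intro hc; linarith)
      have w2 : W (k - 2 * ((d1:ℤ) * d2)) = 0 := by
        rw [hW]; exact if_neg (by intro hc; linarith)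
      rw [w1, w2]
      simp
    · rcases lt_or_ge k (2 * ((d1:ℤ) * d2)) with h' | h'
      · have w2 : W (k - 2 * ((d1:ℤ) * d2)) = 0 := by
          rw [hW]; exact if_neg (by intro hc; linarith)
        have e1 := W_formula d1 d2 hd1 hd2 W hW k hk
        have e2 := W_formula d1 d2 hd1 hd2 W hW (k - (d1:ℤ) * d2) (by linarith)
        simp only [dvd_sub_left hd2D, dvd_sub_left hd1D, ediv1, ediv2] at e2
        have hx : k / (d1:ℤ) < 2 * d2 := Int.ediv_lt_of_lt_mul h1 (by linarith)
        have hy : k / (d2:ℤ) < 2 * d1 := Int.ediv_lt_of_lt_mul h2 (by linarith)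
        rw [w2]
        by_cases hA : (d2:ℤ) ∣ k <;> by_cases hB : (d1:ℤ) ∣ k <;>
          simp only [hA, hB, if_true, if_false, if_pos, if_neg, not_false_iff] at e1 e2 <;>
          push_cast at e1 e2 ⊢ <;> linarith
      · exact (hzero k h').ge
  · intro k hk
    exact hzero k hk.le
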